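/- Let f : [q]^d → F be symmetric, let d_1 + ... + d_r = d, and let σ_i, τ_i ∈ [q]^{d_i} for i = 1,...,r. If Peer(σ_i, f) = Peer(τ_i, f) for all i, then f(τ_1τ_2⋯τ_r) = f(σ_1σ_2⋯σ_r), where juxtaposition denotes concatenation of tuples. -/

import Mathlib

/-- Pinning: fix the last `k` arguments of a symmetric `d`-ary function to `τ`. -/
def Pin {q d k : ℕ} {α : Type*} (h : k ≤ d) (f : (Fin d → Fin q) → α)
    (τ : Fin k → Fin q) : (Fin (d - k) → Fin q) → α :=
  fun σ => f (fun i => if h' : (i : ℕ) < d - k then σ ⟨i, h'⟩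
    else τ ⟨(i : ℕ) - (d - k), by have := i.isLt; omega⟩)

/-- Peer class of `τ`: all tuples whose pinning of `f` agrees with that of `τ`. -/
def Peer {q d k : ℕ} {α : Type*} (h : k ≤ d) (f : (Fin d → Fin q) → α)
    (τ : Fin k → Fin q) : Set (Fin k → Fin q) :=
  {σ | Pin h f σ = Pin h f τ}

/-- A function on `[q]^d` is symmetric if invariant under permutations of coordinates. -/
def Symm {q d : ℕ} {α : Type*} (f : (Fin d → Fin q) → α) : Prop :=
  ∀ (ρ : Equiv.Perm (Fin d)) (x : Fin d → Fin q), f (x ∘ ρ) = f x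

/-- `f` is `C`-regular: for every `k ≤ d` there are at most `C` distinct pinnings. -/
def CRegular {q d : ℕ} {α : Type*} (C : ℕ) (f : (Fin d → Fin q) → α) : Prop :=
  ∀ (k : ℕ) (h : k ≤ d), (Set.range (Pin h f)).ncard ≤ C

/-- Concatenation of `r` tuples of lengths `d 0, …, d (r-1)` into a single tuple
of length `∑ i, d i` (via a fixed bijection `Fin (∑ i, d i) ≃ Σ i, Fin (d i)`). -/
noncomputable def flatten {q r : ℕ} (d : Fin r → ℕ) (t : ∀ i, Fin (d i) → Fin q) :
    Fin (∑ i, d i) → Fin q :=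
  fun j =>
    let s := (Fintype.equivFinOfCardEq
      (by simp [Fintype.card_sigma] : Fintype.card (Σ i, Fin (d i)) = ∑ i, d i)).symm j
    t s.1 s.2

/-- The multiset of values of a tuple. -/
def MS {β γ : Type*} [Fintype β] (x : β → γ) : Multiset γ :=
  Finset.univ.val.map x

lemma MS_fin {n : ℕ} {γ : Type*} (x : Fin n → γ) : MS x = (List.ofFn x : Multiset γ) := by
  simp [MS, Fin.univ_def, List.ofFn_eq_map, Finset.val]

lemma MS_card {β γ : Type*} [Fintype β] (x : β → γ) : (MS x).card = Fintype.card β := by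
  rw [MS, Multiset.card_map]; rfl

lemma MS_comp_equiv {β β' γ : Type*} [Fintype β] [Fintype β'] (e : β' ≃ β) (g : β → γ) :
    MS (g ∘ e) = MS g := by
  unfold MS
  conv_rhs => rw [← Finset.map_univ_equiv e]
  rw [Finset.map_val, Multiset.map_map]
  rfl

lemma MS_sigma {r : ℕ} {γ : Type*} (d : Fin r → ℕ) (t : ∀ i, Fin (d i) → γ) :
    MS (fun s : Σ i, Fin (d i) => t s.1 s.2) = ∑ i, MS (t i) := by
  unfold MS
  rw [← Finset.univ_sigma_univ]
  rw [Finset.sigma]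
  simp only [Finset.sum, Multiset.map_map]
  simp only [Multiset.sigma, Multiset.map_bind, Multiset.map_map, Function.comp_def]
  rfl

lemma MS_append {m n : ℕ} {γ : Type*} (a : Fin m → γ) (b : Fin n → γ) :
    MS (Fin.append a b) = MS a + MS b := by
  simp [MS_fin, List.ofFn_fin_append]

lemma MS_realize {q n : ℕ} (m : Multiset (Fin q)) (h : m.card = n) :
    ∃ x : Fin n → Fin q, MS x = m := by
  obtain ⟨l, rfl⟩ := m.exists_rep
  have hn : n = l.length := by rw [← h]; simp
  refine ⟨fun i => l.get (Fin.cast hn i), ?_⟩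
  rw [MS_fin]
  congr 1
  apply List.ext_get (by simpa using hn)
  intro i h1 h2
  simp

lemma symm_eq {q n : ℕ} {α : Type*} {f : (Fin n → Fin q) → α} (hf : Symm f)
    {x y : Fin n → Fin q} (h : MS x = MS y) : f x = f y := by
  have hperm : (List.ofFn x).Perm (List.ofFn y) := by
    rw [← Multiset.coe_eq_coe, ← MS_fin, ← MS_fin]; exact h
  have h1 : x ∘ Tuple.sort x = y ∘ Tuple.sort y := by
    apply List.ofFn_injective
    exact List.Perm.eq_of_pairwise'
      (Tuple.monotone_sort x).sortedLE_ofFn.pairwise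
      (Tuple.monotone_sort y).sortedLE_ofFn.pairwise
      (((Tuple.sort x).ofFn_comp_perm x).trans
        (hperm.trans ((Tuple.sort y).ofFn_comp_perm y).symm))
  calc f x = f (x ∘ Tuple.sort x) := (hf _ x).symm
    _ = f (y ∘ Tuple.sort y) := by rw [h1]
    _ = f y := hf _ y

lemma MS_pin {q D k : ℕ} (h : k ≤ D) (a : Fin (D - k) → Fin q) (b : Fin k → Fin q) :
    MS (fun i : Fin D => if h' : (i : ℕ) < D - k then a ⟨i, h'⟩
      else b ⟨(i : ℕ) - (D - k), by have := i.isLt; omega⟩) = MS a + MS b := by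
  have e : D = (D - k) + k := by omega
  rw [← MS_append a b]
  rw [← MS_comp_equiv (finCongr e) (Fin.append a b)]
  congr 1
  funext i
  simp only [Function.comp]
  by_cases h' : (i : ℕ) < D - k
  · rw [dif_pos h']
    have he : (finCongr e) i = Fin.castAdd k ⟨(i : ℕ), h'⟩ := rfl
    rw [he, Fin.append_left]
  · rw [dif_neg h']
    have he : (finCongr e) i
        = Fin.natAdd (D - k) ⟨(i : ℕ) - (D - k), by have := i.isLt; omega⟩ := by
      apply Fin.ext
      simp only [finCongr_apply, Fin.coe_cast, Fin.natAdd]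
      omega
    rw [he, Fin.append_right]

lemma MS_flatten {q r : ℕ} (d : Fin r → ℕ) (t : ∀ i, Fin (d i) → Fin q) :
    MS (flatten d t) = ∑ i, MS (t i) := by
  rw [← MS_sigma d t]
  exact MS_comp_equiv ((Fintype.equivFinOfCardEq
    (by simp [Fintype.card_sigma] : Fintype.card (Σ i, Fin (d i)) = ∑ i, d i)).symm)
    (fun s : Σ i, Fin (d i) => t s.1 s.2)

lemma card_finsum {ι γ : Type*} (s : Finset ι) (f : ι → Multiset γ) :
    (∑ i ∈ s, f i).card = ∑ i ∈ s, (f i).card := by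
  classical
  induction s using Finset.induction with
  | empty => simp
  | @insert a s h ih => simp [Finset.sum_insert h, Multiset.card_add, ih]

theorem stmt_1 {q r : ℕ} {α : Type*} (d : Fin r → ℕ)
    (f : (Fin (∑ i, d i) → Fin q) → α) (hf : Symm f)
    (σ τ : ∀ i, Fin (d i) → Fin q)
    (hpeer : ∀ i : Fin r,
      Peer (Finset.single_le_sum (fun j _ => Nat.zero_le (d j)) (Finset.mem_univ i)) f (σ i)
      = Peer (Finset.single_le_sum (fun j _ => Nat.zero_le (d j)) (Finset.mem_univ i)) f (τ i)) :
    f (flatten d τ) = f (flatten d σ) := by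
  classical
  have hpin : ∀ i : Fin r,
      Pin (Finset.single_le_sum (fun j _ => Nat.zero_le (d j)) (Finset.mem_univ i)) f (σ i)
      = Pin (Finset.single_le_sum (fun j _ => Nat.zero_le (d j)) (Finset.mem_univ i)) f (τ i) := by
    intro i
    have h0 : σ i ∈ Peer (Finset.single_le_sum (fun j _ => Nat.zero_le (d j))
        (Finset.mem_univ i)) f (σ i) := rfl
    rw [hpeer i] at h0
    exact h0
  have key : ∀ j : ℕ, j ≤ r → ∀ u : Fin (∑ i, d i) → Fin q,
      MS u = ∑ i : Fin r, (if (i : ℕ) < j then MS (τ i) else MS (σ i)) →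
      f u = f (flatten d σ) := by
    intro j
    induction j with
    | zero =>
      intro _ u hu
      apply symm_eq hf
      rw [hu, MS_flatten]
      simp
    | succ j ih =>
      intro hj u hu
      have hjr : j < r := by omega
      set i0 : Fin r := ⟨j, hjr⟩ with hi0
      have hval : (i0 : ℕ) = j := rfl
      set m : Multiset (Fin q) :=
        ∑ i ∈ Finset.univ.erase i0, (if (i : ℕ) < j then MS (τ i) else MS (σ i)) with hm
      have hrest : ∀ i ∈ Finset.univ.erase i0,
          (if (i : ℕ) < j + 1 then MS (τ i) else MS (σ i))
          = (if (i : ℕ) < j then MS (τ i) else MS (σ i)) := by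
        intro i hi
        have hne : (i : ℕ) ≠ j := by
          simp only [Finset.mem_erase, Finset.mem_univ, and_true] at hi
          intro hij
          exact hi (Fin.ext (by rw [hij, hval]))
        by_cases h1 : (i : ℕ) < j
        · rw [if_pos h1, if_pos (by omega)]
        · rw [if_neg h1, if_neg (by omega)]
      have hS1 : ∑ i : Fin r, (if (i : ℕ) < j + 1 then MS (τ i) else MS (σ i))
          = MS (τ i0) + m := by
        rw [← Finset.add_sum_erase _ _ (Finset.mem_univ i0)]
        congr 1
        · rw [if_pos (by omega)]
        · exact Finset.sum_congr rfl hrest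
      have hS0 : ∑ i : Fin r, (if (i : ℕ) < j then MS (τ i) else MS (σ i))
          = MS (σ i0) + m := by
        rw [← Finset.add_sum_erase _ _ (Finset.mem_univ i0)]
        congr 1
        rw [if_neg (by omega)]
      have hmcard : m.card = (∑ i, d i) - d i0 := by
        have h1 : m.card = ∑ i ∈ Finset.univ.erase i0, d i := by
          rw [hm, card_finsum]
          apply Finset.sum_congr rfl
          intro i _
          by_cases h2 : (i : ℕ) < j
          · rw [if_pos h2, MS_card, Fintype.card_fin]
          · rw [if_neg h2, MS_card, Fintype.card_fin]
        have h2 : (∑ i ∈ Finset.univ.erase i0, d i) + d i0 = ∑ i, d i :=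
          Finset.sum_erase_add _ _ (Finset.mem_univ i0)
        omega
      obtain ⟨σ0, hσ0⟩ := MS_realize m hmcard
      set hle : d i0 ≤ ∑ i, d i :=
        Finset.single_le_sum (fun j _ => Nat.zero_le (d j)) (Finset.mem_univ i0) with hhle
      let v : (Fin (d i0) → Fin q) → Fin (∑ i, d i) → Fin q := fun b i =>
        if h' : (i : ℕ) < (∑ i, d i) - d i0 then σ0 ⟨(i : ℕ), h'⟩
        else b ⟨(i : ℕ) - ((∑ i, d i) - d i0), by have := i.isLt; omega⟩
      have e1 : f (v (σ i0)) = f (v (τ i0)) := congrFun (hpin i0) σ0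
      have hv : ∀ b : Fin (d i0) → Fin q, MS (v b) = MS σ0 + MS b := fun b =>
        MS_pin hle σ0 b
      calc f u = f (v (τ i0)) := symm_eq hf (by rw [hu, hS1, hv, hσ0, add_comm])
        _ = f (v (σ i0)) := e1.symm
        _ = f (flatten d σ) := ih (by omega) _ (by rw [hv, hσ0, add_comm, ← hS0])
  apply key r le_rfl
  rw [MS_flatten]
  apply Finset.sum_congr rfl
  intro i _
  rw [if_pos i.isLt]
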